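/- Let R_d be a commutative unital ring of complex-valued functions on D^d, R_1 a commutative unital ring of functions on D, and D : R_d → R_1, U : R_1 → R_d ring homomorphisms with D∘U = id on R_1. If I and J are finitely generated ideals of R_1, I_d and J_d are the ideals of R_d generated by the U-images of generators of I and J respectively, and I_d ∩ J_d is generated by p_1,...,p_M, then I ∩ J is generated by Dp_1,...,Dp_M; in particular I ∩ J is finitely generated. -/
import Mathlib


/-- Transfer of finite generation of intersections of finitely generated ideals along a ring
retraction `D ∘ U = id`: if `I = ⟨f⟩`, `J = ⟨g⟩` in `R₁`, and the intersection of the ideals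
generated by `U f`, `U g` in `R_d` is generated by `p₁, …, p_M`, then `I ∩ J` is generated by
`D p₁, …, D p_M`; in particular `I ∩ J` is finitely generated. -/
theorem inter_fg_of_retraction {Rd R1 : Type*} [CommRing Rd] [CommRing R1]
    (D : Rd →+* R1) (U : R1 →+* Rd) (hDU : ∀ g : R1, D (U g) = g)
    {K L M : ℕ} (f : Fin K → R1) (g : Fin L → R1) (p : Fin M → Rd)
    (hp : Ideal.span (Set.range (U ∘ f)) ⊓ Ideal.span (Set.range (U ∘ g)) =
      Ideal.span (Set.range p)) :
    Ideal.span (Set.range f) ⊓ Ideal.span (Set.range g) =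
      Ideal.span (Set.range (D ∘ p)) ∧
    (Ideal.span (Set.range f) ⊓ Ideal.span (Set.range g)).FG := by
  have hmapD : ∀ {N : ℕ} (q : Fin N → Rd),
      Ideal.map D (Ideal.span (Set.range q)) = Ideal.span (Set.range (D ∘ q)) := by
    intro N q
    rw [Ideal.map_span, ← Set.range_comp]
  have hDUf : ∀ {N : ℕ} (h : Fin N → R1),
      Ideal.map D (Ideal.span (Set.range (U ∘ h))) = Ideal.span (Set.range h) := by
    intro N h
    rw [hmapD]
    congr 1
    ext x
    constructor
    · rintro ⟨i, rfl⟩; exact ⟨i, (hDU (h i)).symm⟩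
    · rintro ⟨i, rfl⟩; exact ⟨i, hDU (h i)⟩
  have key : Ideal.span (Set.range f) ⊓ Ideal.span (Set.range g) =
      Ideal.span (Set.range (D ∘ p)) := by
    apply le_antisymm
    · rintro x ⟨hxf, hxg⟩
      have hUx : U x ∈ Ideal.span (Set.range p) := by
        rw [← hp]
        constructor
        · have := Ideal.mem_map_of_mem U hxf
          rwa [Ideal.map_span, ← Set.range_comp] at this
        · have := Ideal.mem_map_of_mem U hxg
          rwa [Ideal.map_span, ← Set.range_comp] at this
      have : D (U x) ∈ Ideal.map D (Ideal.span (Set.range p)) :=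
        Ideal.mem_map_of_mem D hUx
      rwa [hDU, hmapD] at this
    · rw [← hmapD, ← hp]
      refine le_inf ?_ ?_
      · calc Ideal.map D (Ideal.span (Set.range (U ∘ f)) ⊓ Ideal.span (Set.range (U ∘ g)))
            ≤ Ideal.map D (Ideal.span (Set.range (U ∘ f))) := Ideal.map_mono inf_le_left
          _ = Ideal.span (Set.range f) := hDUf f
      · calc Ideal.map D (Ideal.span (Set.range (U ∘ f)) ⊓ Ideal.span (Set.range (U ∘ g)))
            ≤ Ideal.map D (Ideal.span (Set.range (U ∘ g))) := Ideal.map_mono inf_le_right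
          _ = Ideal.span (Set.range g) := hDUf g
  exact ⟨key, key ▸ Submodule.fg_span (Set.finite_range _)⟩
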